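/- In every legal history of the punching system, each process's operations strictly alternate starting with a punch-in: for every legal list S of punching operations and every identifier i, the subsequence of S consisting of the operations with issuer i has a punchIn at every even position and a punchOut at every odd position (positions counted from 0). -/

import Mathlib

/-- Operations of the punching system. -/
inductive POp (I : Type) where
  | punchIn (t : ℕ) (i : I)
  | punchOut (i : I)

namespace POp

variable {I : Type}

def issuer : POp I → I
  | punchIn _ i => i
  | punchOut i => i

def isPunchIn : POp I → Prop
  | punchIn _ _ => True
  | punchOut _ => False

def isPunchOut : POp I → Prop
  | punchIn _ _ => False
  | punchOut _ => True

/-- The last operation in `S` issued by `i`, if any. -/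
def lastOf [DecidableEq I] (S : List (POp I)) (i : I) : Option (POp I) :=
  (S.filter fun op => decide (op.issuer = i)).getLast?

/-- Validity predicate of the punching system. -/
def valid [DecidableEq I] (S : List (POp I)) : POp I → Prop
  | punchIn _ i => lastOf S i = none ∨ ∃ op, lastOf S i = some op ∧ op.isPunchOut
  | punchOut i => ∃ op, lastOf S i = some op ∧ op.isPunchIn

end POp

/-- A history is legal if every operation is valid against the prefix before it. -/
def PLegal {I : Type} [DecidableEq I] (S : List (POp I)) : Prop :=
  ∀ (P : List (POp I)) (op : POp I) (Q : List (POp I)), S = P ++ op :: Q → POp.valid P op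

/-- In every legal history, each process's operations strictly alternate,
starting with a punch-in: in the subsequence of operations issued by `i`,
even positions are punch-ins and odd positions are punch-outs. -/

def PAlt {I : Type} (L : List (POp I)) : Prop :=
  ∀ (k : ℕ) (hk : k < L.length),
    (k % 2 = 0 → (L.get ⟨k, hk⟩).isPunchIn) ∧
    (k % 2 = 1 → (L.get ⟨k, hk⟩).isPunchOut)

lemma not_in_out {I : Type} (op : POp I) : op.isPunchIn → op.isPunchOut → False := by
  cases op <;> simp [POp.isPunchIn, POp.isPunchOut]

lemma alt_snoc {I : Type} {F : List (POp I)} {op : POp I}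
    (hAlt : PAlt F)
    (h0 : F.length % 2 = 0 → op.isPunchIn)
    (h1 : F.length % 2 = 1 → op.isPunchOut) :
    PAlt (F ++ [op]) := by
  intro k hk
  simp only [List.get_eq_getElem]
  rcases lt_or_eq_of_le (Nat.lt_succ_iff.mp (by simpa using hk)) with h | h
  · rw [List.getElem_append_left h]
    exact hAlt k h
  · subst h
    rw [List.getElem_concat_length]
    · exact ⟨h0, h1⟩
    · rfl

lemma alt_core {I : Type} [DecidableEq I] (S : List (POp I)) (hS : PLegal S) (i : I) :
    PAlt (S.filter fun op => decide (op.issuer = i)) := by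
  induction S using List.reverseRecOn with
  | nil => intro k hk; simp at hk
  | append_singleton T op ih =>
    have hT : PLegal T := fun P op' Q h => hS P op' (Q ++ [op]) (by rw [h]; simp)
    have hv : POp.valid T op := hS T op [] rfl
    have ihT := ih hT
    set F := T.filter fun op => decide (op.issuer = i) with hF
    by_cases hi : op.issuer = i
    · have hfil : (T ++ [op]).filter (fun op => decide (op.issuer = i)) = F ++ [op] := by
        simp [List.filter_append, hi, ← hF]
      rw [hfil]
      -- analyze op
      cases hop : op with
      | punchIn t j =>
        have hj : j = i := by rw [hop] at hi; exact hi
        subst hj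
        rw [hop] at hv
        have hpar : F.length % 2 = 0 := by
          rcases hv with h | ⟨op', hlast, hout⟩
          · have : F = [] := by
              have := List.getLast?_eq_none_iff.mp h
              simpa [POp.lastOf, ← hF] using this
            simp [this]
          · have hlast' : F.getLast? = some op' := by
              simpa [POp.lastOf, ← hF] using hlast
            have hne : F ≠ [] := by
              intro h; rw [h] at hlast'; simp at hlast'
            have hlen : 0 < F.length := List.length_pos_iff.mpr hne
            have hget : F.getLast? = some (F.get ⟨F.length - 1, by omega⟩) := by
              rw [List.getLast?_eq_getLast hne, List.getLast_eq_getElem, List.get_eq_getElem]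
            rw [hget] at hlast'
            have hop' : op' = F.get ⟨F.length - 1, by omega⟩ := by
              injection hlast'.symm
            by_contra hodd
            have : (F.length - 1) % 2 = 0 := by omega
            have := (ihT (F.length - 1) (by omega)).1 this
            rw [← hop'] at this
            exact not_in_out op' this hout
        refine alt_snoc ihT (fun _ => ?_) (fun h => absurd (hpar ▸ h) (by simp))
        simp [POp.isPunchIn]
      | punchOut j =>
        have hj : j = i := by rw [hop] at hi; exact hi
        subst hj
        rw [hop] at hv
        obtain ⟨op', hlast, hin⟩ := hv
        have hlast' : F.getLast? = some op' := by
          simpa [POp.lastOf, ← hF] using hlast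
        have hne : F ≠ [] := by
          intro h; rw [h] at hlast'; simp at hlast'
        have hlen : 0 < F.length := List.length_pos_iff.mpr hne
        have hget : F.getLast? = some (F.get ⟨F.length - 1, by omega⟩) := by
          rw [List.getLast?_eq_getLast hne, List.getLast_eq_getElem, List.get_eq_getElem]
        rw [hget] at hlast'
        have hop' : op' = F.get ⟨F.length - 1, by omega⟩ := by
          injection hlast'.symm
        have hpar : F.length % 2 = 1 := by
          by_contra heven
          have : (F.length - 1) % 2 = 1 := by omega
          have := (ihT (F.length - 1) (by omega)).2 this
          rw [← hop'] at this
          exact not_in_out op' hin this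
        refine alt_snoc ihT (fun h => absurd (hpar ▸ h) (by simp)) (fun _ => ?_)
        simp [POp.isPunchOut]
    · have hfil : (T ++ [op]).filter (fun op => decide (op.issuer = i)) = F := by
        simp [List.filter_append, hi, ← hF]
      rw [hfil]; exact ihT

theorem punching_alternation {I : Type} [DecidableEq I]
    (S : List (POp I)) (hS : PLegal S) (i : I) :
    ∀ (k : ℕ) (hk : k < (S.filter fun op => decide (op.issuer = i)).length),
      (k % 2 = 0 → ((S.filter fun op => decide (op.issuer = i)).get ⟨k, hk⟩).isPunchIn) ∧
      (k % 2 = 1 → ((S.filter fun op => decide (op.issuer = i)).get ⟨k, hk⟩).isPunchOut) := by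
  exact alt_core S hS i
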